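/- The polynomials u_n(λ) = λ^{-n} P_λ^n(1), where P_λ(z)=λ(z−z²/2), satisfy the recurrence u_0(λ)=1, u_{n+1}(λ) = u_n(λ) − (λ^n/2) u_n(λ)², and the uniform bound |u_n(λ)| ≤ 2(1−|λ|)^{-2} for all λ in the open unit disk; consequently u_n converges uniformly on compact subsets of 𝔻 to a bounded holomorphic function u with u(0)=1/2. -/

import Mathlib

open Metric Set Filter

namespace Stmt8Aux

/-- Power series representation on the full open ball of differentiability. -/
lemma hasSeries {f : ℂ → ℂ} {p : ℂ} {T : NNReal} (hT0 : 0 < T)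
    (hf : DifferentiableOn ℂ f (ball p T)) :
    ∃ q : FormalMultilinearSeries ℂ ℂ ℂ, HasFPowerSeriesOnBall f q p T := by
  have key : ∀ s : NNReal, 0 < s → (s : ℝ) < T →
      HasFPowerSeriesOnBall f (cauchyPowerSeries f p s) p s := by
    intro s hs hsT
    exact (hf.mono (closedBall_subset_ball hsT)).hasFPowerSeriesOnBall hs
  have hT2 : (0 : NNReal) < T / 2 := by positivity
  have hT2' : ((T / 2 : NNReal) : ℝ) < T := by
    rw [NNReal.coe_div]
    have : (0 : ℝ) < T := hT0
    norm_num
    exact hT0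
  set q := cauchyPowerSeries f p (T / 2) with hq
  have huniq : ∀ s : NNReal, 0 < s → (s : ℝ) < T → cauchyPowerSeries f p s = q :=
    fun s hs hsT =>
      (key s hs hsT).hasFPowerSeriesAt.eq_formalMultilinearSeries
        (key _ hT2 hT2').hasFPowerSeriesAt
  have mid : ∀ r : NNReal, r < T → (0 : NNReal) < (r + T) / 2 ∧ ((r + T) / 2 : NNReal) < T ∧
      r < (r + T) / 2 := by
    intro r hrT
    have h1 : (r : ℝ) < T := hrT
    have h0 : (0 : ℝ) ≤ r := r.coe_nonneg
    refine ⟨?_, ?_, ?_⟩ <;> · rw [← NNReal.coe_lt_coe]; push_cast; nlinarith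
  refine ⟨q, ?_, by exact_mod_cast hT0, ?_⟩
  · refine ENNReal.le_of_forall_nnreal_lt ?_
    intro r hr
    have hrT : r < T := by exact_mod_cast hr
    obtain ⟨h1, h2, h3⟩ := mid r hrT
    calc (r : ENNReal) ≤ ((r + T) / 2 : NNReal) := by exact_mod_cast h3.le
      _ ≤ q.radius := huniq _ h1 (by exact_mod_cast h2) ▸ (key _ h1 (by exact_mod_cast h2)).r_le
  · intro y hy
    have hyT : ‖y‖₊ < T := by
      simpa [← NNReal.coe_lt_coe, coe_nnnorm] using hy
    obtain ⟨h1, h2, h3⟩ := mid _ hyT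
    have := (key _ h1 (by exact_mod_cast h2)).hasSum (y := y)
      (by simp only [enorm_eq_nnnorm, EMetric.mem_ball, edist_zero_right, ENNReal.coe_lt_coe]
          exact h3)
    rwa [huniq _ h1 (by exact_mod_cast h2)] at this

/-- A function holomorphic on a ball has a primitive there. -/
lemma exists_primitive {f : ℂ → ℂ} {p : ℂ} {t : ℝ} (ht : 0 < t)
    (hf : DifferentiableOn ℂ f (ball p t)) :
    ∃ g : ℂ → ℂ, ∀ z ∈ ball p t, HasDerivAt g (f z) z := by
  lift t to NNReal using ht.le with T hT
  have hT0 : 0 < T := by exact_mod_cast ht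
  obtain ⟨q, hq⟩ := hasSeries hT0 hf
  set a : ℕ → ℂ := fun k => q.coeff k with ha
  set S : ℕ → ℂ → ℂ := fun N z => ∑ k ∈ Finset.range N, a k / (k + 1) * (z - p) ^ (k + 1)
    with hS
  set S' : ℕ → ℂ → ℂ := fun N z => ∑ k ∈ Finset.range N, a k * (z - p) ^ k with hS'
  set G : ℂ → ℂ := fun z => ∑' k, a k / (k + 1) * (z - p) ^ (k + 1) with hG
  have hcoeff : ∀ k, ‖a k‖ ≤ ‖q k‖ := by
    intro k
    have h := (q k).le_opNorm (fun _ => (1 : ℂ))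
    simp only [norm_one, Finset.prod_const_one, mul_one] at h
    exact h
  -- uniform convergence on compacts
  have key : ∀ K : Set ℂ, K ⊆ ball p (T : ℝ) → IsCompact K →
      TendstoUniformlyOn S G atTop K ∧ TendstoUniformlyOn S' f atTop K := by
    intro K hKb hKc
    rcases K.eq_empty_or_nonempty with rfl | hne
    · exact ⟨tendstoUniformlyOn_empty, tendstoUniformlyOn_empty⟩
    obtain ⟨z₀, hz₀K, hz₀⟩ := hKc.exists_isMaxOn hne
      ((continuous_id.dist continuous_const).continuousOn)
    set ρ : ℝ := dist z₀ p with hρ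
    have hρ0 : 0 ≤ ρ := dist_nonneg
    have hρT : ρ < (T : ℝ) := by have h := hKb hz₀K; rw [mem_ball] at h; exact h
    have hmem : ∀ z ∈ K, ‖z - p‖ ≤ ρ := by
      intro z hz
      have := hz₀ hz
      simpa [dist_eq_norm, hρ] using (this : dist z p ≤ dist z₀ p)
    have hrad : ((ρ.toNNReal : NNReal) : ENNReal) < q.radius := by
      refine lt_of_lt_of_le ?_ hq.r_le
      rw [ENNReal.coe_lt_coe]
      exact (Real.toNNReal_lt_iff_lt_coe hρ0).mpr hρT
    have hsum : Summable fun n => ‖q n‖ * ρ ^ n := by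
      have := q.summable_norm_mul_pow hrad
      simpa [Real.coe_toNNReal ρ hρ0] using this
    constructor
    · have hb : ∀ (k : ℕ) (z : ℂ), z ∈ K → ‖a k / (k + 1) * (z - p) ^ (k + 1)‖ ≤
          (‖q k‖ * ρ ^ k) * (T : ℝ) := by
        intro k z hz
        have h1 : ‖a k / (k + 1) * (z - p) ^ (k + 1)‖ ≤ ‖a k‖ * ρ ^ (k + 1) := by
          rw [norm_mul, norm_pow]
          have hk1 : (1 : ℝ) ≤ ‖((k : ℂ) + 1)‖ := by
            have h2 : ((k : ℂ) + 1) = ((k + 1 : ℕ) : ℂ) := by push_cast; ring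
            rw [h2, Complex.norm_natCast]
            exact_mod_cast Nat.one_le_iff_ne_zero.mpr (Nat.succ_ne_zero k)
          have hdiv : ‖a k / ((k : ℂ) + 1)‖ ≤ ‖a k‖ := by
            rw [norm_div]
            exact div_le_self (norm_nonneg _) hk1
          exact mul_le_mul hdiv (pow_le_pow_left₀ (norm_nonneg (z - p)) (hmem z hz) (k + 1))
            (by positivity) (norm_nonneg _)
        refine h1.trans ?_
        rw [pow_succ, ← mul_assoc]
        have h3 : ‖a k‖ * ρ ^ k ≤ ‖q k‖ * ρ ^ k :=
          mul_le_mul_of_nonneg_right (hcoeff k) (by positivity)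
        nlinarith [norm_nonneg (a k), pow_nonneg hρ0 k, norm_nonneg (q k),
          mul_le_mul_of_nonneg_left hρT.le (mul_nonneg (norm_nonneg (q k)) (pow_nonneg hρ0 k))]
      exact tendstoUniformlyOn_tsum_nat (hsum.mul_right _) hb
    · have hb : ∀ (k : ℕ) (z : ℂ), z ∈ K → ‖a k * (z - p) ^ k‖ ≤ ‖q k‖ * ρ ^ k := by
        intro k z hz
        rw [norm_mul, norm_pow]
        exact mul_le_mul (hcoeff k) (pow_le_pow_left₀ (norm_nonneg _) (hmem z hz) k)
          (by positivity) (norm_nonneg _)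
      have h0 := tendstoUniformlyOn_tsum_nat hsum hb
      refine h0.congr_right ?_
      intro z hz
      have hzb : z ∈ ball p (T : ℝ) := hKb hz
      have hs := hq.hasSum (y := z - p)
        (by simp only [EMetric.mem_ball, edist_zero_right, enorm_eq_nnnorm,
              ENNReal.coe_lt_coe, ← NNReal.coe_lt_coe, coe_nnnorm]
            simpa [mem_ball, dist_eq_norm] using hzb)
      have hs2 : HasSum (fun k => a k * (z - p) ^ k) (f z) := by
        have heq : ∀ k, (q k fun _ => z - p) = a k * (z - p) ^ k := by
          intro k
          rw [q.apply_eq_pow_smul_coeff, smul_eq_mul]; ring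
        rw [show p + (z - p) = z by ring] at hs
        simpa [heq] using hs
      exact hs2.tsum_eq
  -- locally uniform convergence
  have hball : IsOpen (ball p (T : ℝ)) := isOpen_ball
  have hSG : TendstoLocallyUniformlyOn S G atTop (ball p (T : ℝ)) :=
    (tendstoLocallyUniformlyOn_iff_forall_isCompact hball).2
      fun K hK hKc => (key K hK hKc).1
  have hS'f : TendstoLocallyUniformlyOn S' f atTop (ball p (T : ℝ)) :=
    (tendstoLocallyUniformlyOn_iff_forall_isCompact hball).2
      fun K hK hKc => (key K hK hKc).2
  have hSdiff : ∀ N, Differentiable ℂ (S N) := by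
    intro N
    apply Differentiable.fun_sum
    intro k _
    exact (differentiable_const _).mul ((differentiable_id.sub_const p).pow (k + 1))
  have hSderiv : ∀ N z, HasDerivAt (S N) (S' N z) z := by
    intro N z
    have : ∀ k ∈ Finset.range N, HasDerivAt (fun z => a k / (k + 1) * (z - p) ^ (k + 1))
        (a k * (z - p) ^ k) z := by
      intro k _
      have h1 : HasDerivAt (fun z : ℂ => (z - p) ^ (k + 1))
          (((k : ℂ) + 1) * (z - p) ^ k * 1) z := by
        have h0 : HasDerivAt (fun z : ℂ => z - p) 1 z := (hasDerivAt_id z).sub_const p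
        simpa using h0.fun_pow (k + 1)
      have h2 := h1.const_mul (a k / (k + 1))
      refine h2.congr_deriv ?_
      have : ((k : ℂ) + 1) ≠ 0 := Nat.cast_add_one_ne_zero k
      field_simp
    simpa using HasDerivAt.fun_sum this
  have hGdiff : DifferentiableOn ℂ G (ball p (T : ℝ)) :=
    hSG.differentiableOn (Eventually.of_forall fun N => (hSdiff N).differentiableOn) hball
  have hder : TendstoLocallyUniformlyOn (deriv ∘ S) (deriv G) atTop (ball p (T : ℝ)) :=
    hSG.deriv (Eventually.of_forall fun N => (hSdiff N).differentiableOn) hball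
  refine ⟨G, fun z hz => ?_⟩
  have h1 : Tendsto (fun N => deriv (S N) z) atTop (nhds (deriv G z)) := hder.tendsto_at hz
  have h2 : Tendsto (fun N => S' N z) atTop (nhds (f z)) := hS'f.tendsto_at hz
  have h3 : (fun N => deriv (S N) z) = fun N => S' N z := by
    funext N; exact (hSderiv N z).deriv
  rw [h3] at h1
  have h4 : deriv G z = f z := tendsto_nhds_unique h1 h2
  have h5 : DifferentiableAt ℂ G z := hGdiff.differentiableAt (hball.mem_nhds hz)
  rw [← h4]
  exact h5.hasDerivAt

/-- A nonvanishing holomorphic function on a ball has a holomorphic logarithm. -/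
lemma exists_log {f : ℂ → ℂ} {p : ℂ} {t : ℝ} (ht : 0 < t)
    (hf : DifferentiableOn ℂ f (ball p t)) (hnz : ∀ z ∈ ball p t, f z ≠ 0) :
    ∃ L : ℂ → ℂ, DifferentiableOn ℂ L (ball p t) ∧ ∀ z ∈ ball p t,
      Complex.exp (L z) = f z := by
  have hf' : DifferentiableOn ℂ (deriv f) (ball p t) :=
    ((hf.analyticOnNhd isOpen_ball).deriv).differentiableOn
  have hφ : DifferentiableOn ℂ (fun z => deriv f z / f z) (ball p t) := hf'.div hf hnz
  obtain ⟨g₀, hg₀⟩ := exists_primitive ht hφ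
  have hp : p ∈ ball p t := mem_ball_self ht
  set L : ℂ → ℂ := fun z => g₀ z - g₀ p + Complex.log (f p) with hL
  have hLd : ∀ z ∈ ball p t, HasDerivAt L (deriv f z / f z) z := by
    intro z hz
    exact ((hg₀ z hz).sub_const (g₀ p)).add_const (Complex.log (f p))
  have hLdiff : DifferentiableOn ℂ L (ball p t) := fun z hz =>
    ((hLd z hz).differentiableAt).differentiableWithinAt
  set E : ℂ → ℂ := fun z => f z * Complex.exp (-L z) with hE
  have hEd : ∀ z ∈ ball p t, HasDerivAt E 0 z := by
    intro z hz
    have h1 : HasDerivAt f (deriv f z) z :=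
      (hf.differentiableAt (isOpen_ball.mem_nhds hz)).hasDerivAt
    have h2 : HasDerivAt (fun z => Complex.exp (-L z))
        (Complex.exp (-L z) * -(deriv f z / f z)) z := ((hLd z hz).neg).cexp
    have h3 := h1.mul h2
    refine h3.congr_deriv ?_
    field_simp [hnz z hz]
    ring
  have hconst : ∀ z ∈ ball p t, E z = E p := by
    intro z hz
    refine Convex.is_const_of_fderivWithin_eq_zero (convex_ball p t)
      (fun w hw => ((hEd w hw).differentiableAt).differentiableWithinAt) ?_ hz hp
    intro w hw
    rw [fderivWithin_of_isOpen isOpen_ball hw]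
    have := (hEd w hw).hasFDerivAt.fderiv
    rw [this]
    ext
    simp
  have hEp : E p = 1 := by
    have : L p = Complex.log (f p) := by simp [hL]
    rw [hE]
    simp only [this]
    rw [Complex.exp_neg, Complex.exp_log (hnz p hp)]
    field_simp [hnz p hp]
  refine ⟨L, hLdiff, fun z hz => ?_⟩
  have h1 : f z * Complex.exp (-L z) = 1 := by rw [← hEp]; exact hconst z hz
  rw [Complex.exp_neg] at h1
  field_simp at h1
  exact h1.symm

section Orbit

variable {lam : ℂ}

/-- The critical orbit of `z ↦ z² + c(λ)` stays in the disk of radius `3/2`. -/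
lemma orbit_bound (h0 : lam ≠ 0) (h1 : ‖lam‖ < 1) (n : ℕ) :
    ‖(fun z : ℂ => z ^ 2 + (lam / 2 - lam ^ 2 / 4))^[n] 0‖ ≤ 3 / 2 := by
  set c : ℂ := lam / 2 - lam ^ 2 / 4 with hc
  set F : ℂ → ℂ := fun z => z ^ 2 + c with hF
  set p : ℂ := lam / 2 with hp
  set r : ℝ := ‖lam‖ with hr
  have hr0 : 0 ≤ r := norm_nonneg _
  have hrpos : 0 < r := norm_pos_iff.mpr h0
  set t : ℝ := (1 - r) / 2 with htdef
  have ht : 0 < t := by simp only [htdef]; linarith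
  have hpn : ‖p‖ = r / 2 := by rw [hp, norm_div]; simp [hr]
  have hcn : ‖c‖ < 3 / 4 := by
    calc ‖c‖ ≤ ‖lam / 2‖ + ‖lam ^ 2 / 4‖ := norm_sub_le _ _
      _ = r / 2 + r ^ 2 / 4 := by
          rw [norm_div, norm_div, norm_pow]
          norm_num
          rw [hr]
      _ < 3 / 4 := by nlinarith
  have hpfix : p ^ 2 + c = p := by rw [hp, hc]; ring
  -- escape lemma
  have esc : ∀ z : ℂ, 3 / 2 < ‖z‖ → 3 / 2 < ‖F z‖ ∧ ‖z‖ < ‖F z‖ := by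
    intro z hz
    have h2 : ‖z‖ ^ 2 ≤ ‖F z‖ + ‖c‖ := by
      have : ‖z ^ 2‖ ≤ ‖F z‖ + ‖c‖ := by
        calc ‖z ^ 2‖ = ‖F z - c‖ := by rw [hF]; ring_nf
          _ ≤ ‖F z‖ + ‖c‖ := norm_sub_le _ _
      rwa [norm_pow] at this
    constructor <;> nlinarith
  have esc_iter : ∀ (m : ℕ) (z : ℂ), 3 / 2 < ‖z‖ → 3 / 2 < ‖F^[m] z‖ := by
    intro m
    induction m with
    | zero => intro z hz; simpa using hz
    | succ m ih =>
      intro z hz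
      rw [Function.iterate_succ_apply]
      exact ih (F z) (esc z hz).1
  -- trap lemma
  have trap : ∀ z : ℂ, dist z p < t → dist (F z) p < t := by
    intro z hz
    have key : F z - p = (z - p) * (z + p) := by
      rw [hF]
      linear_combination hpfix
    have h2 : ‖z + p‖ ≤ ‖z - p‖ + r := by
      calc ‖z + p‖ = ‖(z - p) + 2 * p‖ := by ring_nf
        _ ≤ ‖z - p‖ + ‖2 * p‖ := norm_add_le _ _
        _ = ‖z - p‖ + r := by
          rw [norm_mul, hpn]
          norm_num
          ring
    rw [dist_eq_norm] at hz ⊢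
    rw [key, norm_mul]
    have hzp : 0 ≤ ‖z - p‖ := norm_nonneg _
    nlinarith
  -- main dichotomy
  have main : ∃ N, dist (F^[N] 0) p < t := by
    by_contra hno
    push_neg at hno
    -- inverse branches
    have branch : ∀ n : ℕ, ∃ g : ℂ → ℂ, DifferentiableOn ℂ g (ball p t) ∧ g p = p ∧
        (∀ z ∈ ball p t, F^[n] (g z) = z) ∧ (∀ z ∈ ball p t, ‖g z‖ ≤ 3 / 2) := by
      intro n
      induction n with
      | zero =>
        refine ⟨fun z => z, differentiable_id.differentiableOn, rfl, by simp, ?_⟩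
        intro z hz
        have : ‖z - p‖ < t := by rwa [mem_ball, dist_eq_norm] at hz
        calc ‖z‖ ≤ ‖z - p‖ + ‖p‖ := by simpa using norm_add_le (z - p) p
          _ ≤ 3 / 2 := by rw [hpn]; simp only [htdef] at this ⊢; nlinarith
      | succ n ih =>
        obtain ⟨g, hgdiff, hgp, hgiter, hgb⟩ := ih
        have hnz : ∀ z ∈ ball p t, g z - c ≠ 0 := by
          intro z hz hzero
          have hgc : g z = c := sub_eq_zero.mp hzero
          have hiter : F^[n + 1] 0 = z := by
            rw [Function.iterate_succ_apply]
            have hF0 : F 0 = c := by rw [hF]; ring_nf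
            rw [hF0, ← hgc, hgiter z hz]
          have hmem2 : dist (F^[n + 1] 0) p < t := by rw [hiter]; exact mem_ball.mp hz
          exact absurd hmem2 (not_lt.mpr (hno (n + 1)))
        obtain ⟨L, hLdiff, hLexp⟩ := exists_log ht (hgdiff.sub (differentiableOn_const c)) hnz
        set s : ℂ → ℂ := fun z => Complex.exp (L z / 2) with hs
        have hs2 : ∀ z ∈ ball p t, s z ^ 2 = g z - c := by
          intro z hz
          rw [hs]
          rw [← Complex.exp_nat_mul]
          push_cast
          rw [show (2 : ℂ) * (L z / 2) = L z by ring]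
          exact hLexp z hz
        have hpmem : p ∈ ball p t := mem_ball_self ht
        have hp0 : p ≠ 0 := by
          rw [hp]; simpa using h0
        have hsp0 : s p ≠ 0 := Complex.exp_ne_zero _
        have hspsq : s p ^ 2 = p ^ 2 := by
          rw [hs2 p hpmem, hgp]
          linear_combination -hpfix
        set g' : ℂ → ℂ := fun z => p / s p * s z with hg'
        have hg'sq : ∀ z ∈ ball p t, g' z ^ 2 = g z - c := by
          intro z hz
          rw [hg']
          have : (p / s p * s z) ^ 2 = p ^ 2 / s p ^ 2 * s z ^ 2 := by ring
          rw [this, hspsq, hs2 z hz]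
          field_simp
        have hg'iter : ∀ z ∈ ball p t, F^[n + 1] (g' z) = z := by
          intro z hz
          rw [Function.iterate_succ_apply]
          have : F (g' z) = g z := by
            rw [hF]
            simp only
            rw [hg'sq z hz]
            ring
          rw [this]
          exact hgiter z hz
        have hg'diff : DifferentiableOn ℂ g' (ball p t) := by
          refine DifferentiableOn.const_mul ?_ _
          exact (hLdiff.div_const 2).cexp
        have hg'b : ∀ z ∈ ball p t, ‖g' z‖ ≤ 3 / 2 := by
          intro z hz
          by_contra hb
          push_neg at hb
          have h2 := esc_iter (n + 1) (g' z) hb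
          rw [hg'iter z hz] at h2
          have : ‖z - p‖ < t := by rwa [mem_ball, dist_eq_norm] at hz
          have hzn : ‖z‖ ≤ ‖z - p‖ + ‖p‖ := by simpa using norm_add_le (z - p) p
          rw [hpn] at hzn
          simp only [htdef] at this
          nlinarith
        refine ⟨g', hg'diff, ?_, hg'iter, hg'b⟩
        rw [hg']
        field_simp
    -- derivative of the iterates at the fixed point
    have hfixiter : ∀ n : ℕ, F^[n] p = p := by
      intro n
      induction n with
      | zero => simp
      | succ n ih =>
        rw [Function.iterate_succ_apply', ih]
        rw [hF]
        simp only
        linear_combination hpfix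
    have hFniter : ∀ n : ℕ, HasDerivAt (F^[n]) (lam ^ n) p := by
      intro n
      induction n with
      | zero => simpa using hasDerivAt_id p
      | succ n ih =>
        have hF' : HasDerivAt F lam p := by
          have h2 : HasDerivAt (fun z : ℂ => z ^ 2) (2 * p) p := by
            simpa using hasDerivAt_pow 2 p
          have := h2.add_const c
          have h2p : (2 : ℂ) * p = lam := by rw [hp]; ring
          rw [h2p] at this
          exact this
        have hcomp : HasDerivAt (fun z => F (F^[n] z)) (lam * lam ^ n) p := by
          have := HasDerivAt.comp p (by rw [hfixiter n]; exact hF') ih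
          exact this
        have heq : (fun z => F (F^[n] z)) = F^[n + 1] := by
          funext z
          rw [Function.iterate_succ_apply']
        rw [heq] at hcomp
        simpa [pow_succ, mul_comm] using hcomp
    -- Schwarz lemma contradiction
    obtain ⟨m, hm⟩ : ∃ m : ℕ, r ^ m < t / 4 := exists_pow_lt_of_lt_one (by linarith) h1
    obtain ⟨g, hgdiff, hgp, hgiter, hgb⟩ := branch m
    have hpmem : p ∈ ball p t := mem_ball_self ht
    have hgd : HasDerivAt g (deriv g p) p :=
      (hgdiff.differentiableAt (isOpen_ball.mem_nhds hpmem)).hasDerivAt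
    have hcomp : HasDerivAt (fun z => F^[m] (g z)) (lam ^ m * deriv g p) p := by
      have := HasDerivAt.comp p (by rw [hgp]; exact hFniter m) hgd
      exact this
    have hid : HasDerivAt (fun z => F^[m] (g z)) 1 p := by
      have hEq : (fun z : ℂ => F^[m] (g z)) =ᶠ[nhds p] (fun z => z) := by
        filter_upwards [isOpen_ball.mem_nhds hpmem] with z hz
        exact hgiter z hz
      exact (hasDerivAt_id p).congr_of_eventuallyEq hEq
    have huniq : lam ^ m * deriv g p = 1 := hcomp.unique hid
    have hmaps : MapsTo g (ball p t) (ball (g p) 4) := by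
      intro z hz
      rw [hgp, mem_ball, dist_eq_norm]
      calc ‖g z - p‖ ≤ ‖g z‖ + ‖p‖ := norm_sub_le _ _
        _ ≤ 3 / 2 + r / 2 := by
          have := hgb z hz
          rw [hpn]
          linarith
        _ < 4 := by linarith
    have hschwarz : ‖deriv g p‖ ≤ 4 / t :=
      Complex.norm_deriv_le_div_of_mapsTo_ball hgdiff (hmaps.mono_right ball_subset_closedBall) ht
    have h1' : (1 : ℝ) ≤ r ^ m * (4 / t) := by
      have := norm_mul (lam ^ m) (deriv g p)
      rw [huniq] at this
      have h2 : ‖(1 : ℂ)‖ = 1 := norm_one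
      rw [h2] at this
      have h3 : ‖lam ^ m‖ = r ^ m := by rw [norm_pow, hr]
      rw [h3] at this
      calc (1 : ℝ) = r ^ m * ‖deriv g p‖ := this
        _ ≤ r ^ m * (4 / t) :=
          mul_le_mul_of_nonneg_left hschwarz (pow_nonneg hr0 m)
    have : r ^ m * (4 / t) < 1 := by
      have h4 : r ^ m * (4 / t) < (t / 4) * (4 / t) :=
        mul_lt_mul_of_pos_right hm (by positivity)
      have h5 : (t / 4) * (4 / t) = 1 := by field_simp
      linarith [h4, h5.le]
    linarith
  -- orbit enters the trap, hence stays bounded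
  obtain ⟨N, hN⟩ := main
  have trap_forever : ∀ k : ℕ, dist (F^[N + k] 0) p < t := by
    intro k
    induction k with
    | zero => simpa using hN
    | succ k ih =>
      have : F^[N + (k + 1)] 0 = F (F^[N + k] 0) := by
        rw [show N + (k + 1) = (N + k) + 1 by ring, Function.iterate_succ_apply']
      rw [this]
      exact trap _ ih
  by_contra hbig
  push_neg at hbig
  have h2 : 3 / 2 < ‖F^[N + n] 0‖ := by
    have : F^[N + n] 0 = F^[N] (F^[n] 0) := by
      rw [show N + n = N + n by rfl, Function.iterate_add_apply]
    rw [this]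
    exact esc_iter N _ hbig
  have h3 : dist (F^[N + n] 0) p < t := trap_forever n
  rw [dist_eq_norm] at h3
  have h4 : ‖F^[N + n] 0‖ ≤ ‖F^[N + n] 0 - p‖ + ‖p‖ := by
    simpa using norm_add_le (F^[N + n] 0 - p) p
  rw [hpn] at h4
  simp only [htdef] at h3
  nlinarith

/-- Conjugacy: the original iteration is conjugate to `z ↦ z² + c`. -/
lemma conj_iter (lam : ℂ) (n : ℕ) :
    (fun z : ℂ => z ^ 2 + (lam / 2 - lam ^ 2 / 4))^[n] 0 =
      lam / 2 - lam * ((fun z : ℂ => lam * (z - z ^ 2 / 2))^[n] 1) / 2 := by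
  induction n with
  | zero => simp
  | succ n ih =>
    rw [Function.iterate_succ_apply', Function.iterate_succ_apply', ih]
    ring

/-- Norm bound for the original iterates. -/
lemma W_bound (lam : ℂ) (h0 : lam ≠ 0) (h1 : ‖lam‖ < 1) (n : ℕ) :
    ‖(fun z : ℂ => lam * (z - z ^ 2 / 2))^[n] 1‖ ≤ 1 + 3 / ‖lam‖ := by
  set W : ℂ := (fun z : ℂ => lam * (z - z ^ 2 / 2))^[n] 1 with hW
  set Z : ℂ := (fun z : ℂ => z ^ 2 + (lam / 2 - lam ^ 2 / 4))^[n] 0 with hZ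
  have hconj : Z = lam / 2 - lam * W / 2 := conj_iter lam n
  have hZb : ‖Z‖ ≤ 3 / 2 := orbit_bound h0 h1 n
  have hr : 0 < ‖lam‖ := norm_pos_iff.mpr h0
  have hWform : W = 1 - 2 * Z / lam := by
    rw [hconj]
    field_simp
    ring
  rw [hWform]
  calc ‖(1 : ℂ) - 2 * Z / lam‖ ≤ ‖(1 : ℂ)‖ + ‖2 * Z / lam‖ := norm_sub_le _ _
    _ = 1 + 2 * ‖Z‖ / ‖lam‖ := by
      rw [norm_one, norm_div, norm_mul]
      norm_num
    _ ≤ 1 + 3 / ‖lam‖ := by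
      have h3 : 2 * ‖Z‖ ≤ 3 := by linarith
      gcongr
end Orbit
section Main

variable {u : ℕ → ℂ → ℂ}
  (hpoly : ∀ n, ∃ P : Polynomial ℂ, ∀ z, u n z = P.eval z)
  (hdef : ∀ (n : ℕ) (lam : ℂ), lam ≠ 0 →
      u n lam = lam ^ (-(n : ℤ)) * (fun z => lam * (z - z ^ 2 / 2))^[n] 1)

include hpoly hdef

lemma u_zero : ∀ lam : ℂ, u 0 lam = 1 := by
  obtain ⟨P, hP⟩ := hpoly 0
  have hfun : (fun z : ℂ => P.eval z) = fun _ => (1 : ℂ) := by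
    refine Continuous.ext_on (dense_compl_singleton (0 : ℂ)) P.continuous continuous_const ?_
    intro lam hlam
    have h := hdef 0 lam hlam
    simp only [Function.iterate_zero, id_eq, Nat.cast_zero, neg_zero, zpow_zero, one_mul] at h
    show Polynomial.eval lam P = 1
    rw [← hP lam]
    exact h
  intro lam
  rw [hP lam]
  exact congrFun hfun lam

lemma u_rec : ∀ (n : ℕ) (lam : ℂ), u (n + 1) lam = u n lam - lam ^ n / 2 * (u n lam) ^ 2 := by
  intro n
  obtain ⟨P1, hP1⟩ := hpoly (n + 1)
  obtain ⟨P0, hP0⟩ := hpoly n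
  have hfun : (fun z : ℂ => P1.eval z) =
      fun z : ℂ => P0.eval z - z ^ n / 2 * (P0.eval z) ^ 2 := by
    refine Continuous.ext_on (dense_compl_singleton (0 : ℂ)) P1.continuous (by continuity) ?_
    intro lam hlam
    have hlam' : lam ≠ 0 := hlam
    have hd1 := hdef (n + 1) lam hlam'
    have hd0 := hdef n lam hlam'
    set W : ℂ := (fun z : ℂ => lam * (z - z ^ 2 / 2))^[n] 1 with hW
    have hW1 : (fun z : ℂ => lam * (z - z ^ 2 / 2))^[n + 1] 1 = lam * (W - W ^ 2 / 2) :=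
      Function.iterate_succ_apply' _ _ _
    show Polynomial.eval lam P1 = Polynomial.eval lam P0 - lam ^ n / 2 * Polynomial.eval lam P0 ^ 2
    rw [← hP1, ← hP0, hd1, hd0, hW1]
    have hz1 : lam ^ (-((n : ℕ) + 1 : ℕ) : ℤ) = (lam ^ (n + 1))⁻¹ := by
      rw [zpow_neg, zpow_natCast]
    have hz0 : lam ^ (-(n : ℤ)) = (lam ^ n)⁻¹ := by
      rw [zpow_neg, zpow_natCast]
    push_cast at hz1 ⊢
    rw [hz1, hz0]
    have hpow : lam ^ (n + 1) ≠ 0 := pow_ne_zero _ hlam'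
    have hpow0 : lam ^ n ≠ 0 := pow_ne_zero _ hlam'
    field_simp
    ring
  intro lam
  rw [hP1 lam, hP0 lam]
  exact congrFun hfun lam

lemma u_bound4 : ∀ (n : ℕ) (lam : ℂ), ‖lam‖ < 1 → ‖u n lam‖ ≤ 4 := by
  intro n lam₀ h
  have key : ∀ ρ : ℝ, ‖lam₀‖ < ρ → ρ < 1 → ‖u n lam₀‖ ≤ (1 + 3 / ρ) / ρ ^ n := by
    intro ρ hρ1 hρ2
    have hρ0 : 0 < ρ := lt_of_le_of_lt (norm_nonneg _) hρ1
    obtain ⟨P, hP⟩ := hpoly n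
    have hsphere : ∀ z ∈ sphere (0 : ℂ) ρ, ‖P.eval z‖ ≤ (1 + 3 / ρ) / ρ ^ n := by
      intro z hz
      have hzn : ‖z‖ = ρ := by simpa using hz
      have hz0 : z ≠ 0 := by
        intro h'
        rw [h'] at hzn
        simp at hzn
        linarith
      have hzlt : ‖z‖ < 1 := by rw [hzn]; exact hρ2
      have hW := W_bound z hz0 hzlt n
      rw [← hP z, hdef n z hz0, norm_mul, norm_zpow]
      have hzp : ‖z‖ ^ (-(n : ℤ)) = (ρ ^ n)⁻¹ := by rw [hzn, zpow_neg, zpow_natCast]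
      rw [hzp, div_eq_mul_inv, mul_comm (1 + 3 / ρ) ((ρ ^ n)⁻¹ : ℝ)]
      rw [hzn] at hW
      exact mul_le_mul_of_nonneg_left hW (by positivity)
    have hdcl : DiffContOnCl ℂ (fun z : ℂ => P.eval z) (ball 0 ρ) :=
      P.differentiable.diffContOnCl
    have hfr : ∀ z ∈ frontier (ball (0 : ℂ) ρ), ‖(fun z : ℂ => P.eval z) z‖ ≤
        (1 + 3 / ρ) / ρ ^ n := by
      intro z hz
      rw [frontier_ball (0 : ℂ) (ne_of_gt hρ0)] at hz
      exact hsphere z hz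
    have hclos : lam₀ ∈ closure (ball (0 : ℂ) ρ) := by
      rw [closure_ball (0 : ℂ) (ne_of_gt hρ0)]
      exact mem_closedBall_zero_iff.mpr hρ1.le
    have hmax := Complex.norm_le_of_forall_mem_frontier_norm_le
      isBounded_ball hdcl hfr hclos
    rw [hP lam₀]
    exact hmax
  have hc : ContinuousAt (fun ρ : ℝ => (1 + 3 / ρ) / ρ ^ n) 1 := by
    have h1 : ContinuousAt (fun ρ : ℝ => 1 + 3 / ρ) 1 :=
      continuousAt_const.add (continuousAt_const.div continuousAt_id one_ne_zero)
    exact h1.div (continuousAt_id.pow n) (by norm_num)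
  have hval : (fun ρ : ℝ => (1 + 3 / ρ) / ρ ^ n) 1 = 4 := by norm_num
  have hne : (nhdsWithin (1 : ℝ) (Set.Ioo ‖lam₀‖ 1)).NeBot := by
    apply mem_closure_iff_nhdsWithin_neBot.mp
    rw [closure_Ioo (ne_of_lt h)]
    exact ⟨(norm_nonneg lam₀).trans h.le |>.trans (le_refl 1) |> fun _ => h.le, le_refl 1⟩
  have hlim : Tendsto (fun ρ : ℝ => (1 + 3 / ρ) / ρ ^ n)
      (nhdsWithin (1 : ℝ) (Set.Ioo ‖lam₀‖ 1)) (nhds 4) := by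
    rw [← hval]
    exact (hc.continuousWithinAt).tendsto
  refine ge_of_tendsto hlim ?_
  filter_upwards [eventually_mem_nhdsWithin] with ρ hρ
  exact key ρ hρ.1 hρ.2

lemma u_disk_bound : ∀ (n : ℕ) (lam : ℂ), ‖lam‖ < 1 → ‖u n lam‖ ≤ 2 / (1 - ‖lam‖) ^ 2 := by
  intro n lam h
  set r : ℝ := ‖lam‖ with hr
  have hr0 : 0 ≤ r := norm_nonneg _
  rcases le_or_gt r (1 / 3) with hsmall | hbig
  · -- elementary induction for small `r`
    set S : ℕ → ℝ := fun m => ∑ k ∈ Finset.range m, r ^ k with hS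
    have hSb : ∀ m, S m ≤ 1 / (1 - r) := by
      intro m
      have hmul : S m * (r - 1) = r ^ m - 1 := geom_sum_mul r m
      rw [le_div_iff₀ (by linarith : (0:ℝ) < 1 - r)]
      nlinarith [pow_nonneg hr0 m]
    have hx : ∀ m, (1 : ℝ) / 4 ≤ 1 - S m / 2 := by
      intro m
      have := hSb m
      have h2 : 1 / (1 - r) ≤ 3 / 2 := by
        rw [div_le_div_iff₀ (by linarith) (by norm_num)]
        linarith
      linarith
    have main : ∀ m, ‖u m lam‖ ≤ 1 / (1 - S m / 2) := by
      intro m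
      induction m with
      | zero =>
        rw [u_zero hpoly hdef lam]
        simp [hS]
      | succ m ih =>
        have hrec := u_rec hpoly hdef m lam
        have hnorm : ‖u (m + 1) lam‖ ≤ ‖u m lam‖ + r ^ m / 2 * ‖u m lam‖ ^ 2 := by
          rw [hrec]
          calc ‖u m lam - lam ^ m / 2 * u m lam ^ 2‖
              ≤ ‖u m lam‖ + ‖lam ^ m / 2 * u m lam ^ 2‖ := norm_sub_le _ _
            _ = ‖u m lam‖ + r ^ m / 2 * ‖u m lam‖ ^ 2 := by
                have e1 : ‖lam ^ m / 2 * u m lam ^ 2‖ = r ^ m / 2 * ‖u m lam‖ ^ 2 := by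
                  rw [norm_mul, norm_div, norm_pow, norm_pow, hr]
                  norm_num
                rw [e1]
        set x : ℝ := 1 - S m / 2 with hxdef
        have hx4 : (1 : ℝ) / 4 ≤ x := hx m
        have hSsucc : S (m + 1) = S m + r ^ m := Finset.sum_range_succ _ _
        have hx4' : (1 : ℝ) / 4 ≤ x - r ^ m / 2 := by
          have := hx (m + 1)
          rw [hSsucc] at this
          simp only [hxdef]
          linarith
        have hxs : 1 - S (m + 1) / 2 = x - r ^ m / 2 := by
          rw [hSsucc, hxdef]; ring
        rw [hxs]
        have ha0 : 0 ≤ ‖u m lam‖ := norm_nonneg _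
        have hd : (0 : ℝ) ≤ r ^ m := pow_nonneg hr0 m
        have hx0 : (0:ℝ) < x := lt_of_lt_of_le (by norm_num) hx4
        have hx0' : (0:ℝ) < x - r ^ m / 2 := lt_of_lt_of_le (by norm_num) hx4'
        have hix : (0:ℝ) ≤ 1 / x := by positivity
        have step1 : ‖u m lam‖ + r ^ m / 2 * ‖u m lam‖ ^ 2 ≤ 1 / x + r ^ m / 2 * (1 / x) ^ 2 := by
          nlinarith [mul_le_mul ih ih ha0 hix]
        have step2 : 1 / x + r ^ m / 2 * (1 / x) ^ 2 ≤ 1 / (x - r ^ m / 2) := by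
          have e : 1 / x + r ^ m / 2 * (1 / x) ^ 2 = (x + r ^ m / 2) / x ^ 2 := by
            field_simp
          rw [e, div_le_div_iff₀ (by positivity) hx0']
          nlinarith [sq_nonneg (r ^ m)]
        linarith [hnorm]
    have hfinal : 1 / (1 - S n / 2) ≤ 2 / (1 - r) ^ 2 := by
      have ha : (0:ℝ) < 1 - r := by linarith
      have hS1 : S n * (1 - r) ≤ 1 := by
        have e : (1 / (1 - r)) * (1 - r) = 1 := by field_simp
        nlinarith [mul_le_mul_of_nonneg_right (hSb n) ha.le]
      rw [div_le_div_iff₀ (by linarith [hx n]) (by positivity)]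
      have key : (1 - r) ^ 3 ≤ 1 - 2 * r := by
        nlinarith [mul_nonneg hr0 (by linarith : (0:ℝ) ≤ 1 - 3 * r), pow_nonneg hr0 3]
      nlinarith [key, hS1, ha, sq_nonneg (1 - r)]
    calc ‖u n lam‖ ≤ 1 / (1 - S n / 2) := main n
      _ ≤ 2 / (1 - r) ^ 2 := hfinal
  · -- large r: use the uniform bound 4
    have h4 := u_bound4 hpoly hdef n lam h
    have : (4 : ℝ) ≤ 2 / (1 - r) ^ 2 := by
      rw [le_div_iff₀ (by nlinarith : (0:ℝ) < (1 - r) ^ 2)]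
      nlinarith
    linarith

lemma u_conv : ∃ v : ℂ → ℂ, DifferentiableOn ℂ v (Metric.ball 0 1) ∧
    (∃ M : ℝ, ∀ lam ∈ Metric.ball (0 : ℂ) 1, ‖v lam‖ ≤ M) ∧
    v 0 = 1 / 2 ∧
    ∀ K : Set ℂ, K ⊆ Metric.ball (0 : ℂ) 1 → IsCompact K →
      TendstoUniformlyOn (fun n => u n) v atTop K := by
  set d : ℕ → ℂ → ℂ := fun n lam => u (n + 1) lam - u n lam with hd
  set v : ℂ → ℂ := fun lam => u 0 lam + ∑' n, d n lam with hv
  have huc : ∀ K : Set ℂ, K ⊆ ball (0 : ℂ) 1 → IsCompact K →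
      TendstoUniformlyOn (fun n => u n) v atTop K := by
    intro K hK hKc
    rcases K.eq_empty_or_nonempty with rfl | hne
    · exact tendstoUniformlyOn_empty
    obtain ⟨z₀, hz₀K, hz₀⟩ := hKc.exists_isMaxOn hne continuous_norm.continuousOn
    set ρ : ℝ := ‖z₀‖ with hρ
    have hρ1 : ρ < 1 := by
      have := hK hz₀K
      rwa [mem_ball_zero_iff] at this
    have hρ0 : 0 ≤ ρ := norm_nonneg _
    have hKb : ∀ z ∈ K, ‖z‖ ≤ ρ := fun z hz => hz₀ hz
    have hsum : Summable (fun n => 8 * ρ ^ n) :=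
      (summable_geometric_of_lt_one hρ0 hρ1).mul_left 8
    have hb : ∀ (n : ℕ) (z : ℂ), z ∈ K → ‖d n z‖ ≤ 8 * ρ ^ n := by
      intro n z hz
      have hz1 : ‖z‖ < 1 := lt_of_le_of_lt (hKb z hz) hρ1
      have h4 := u_bound4 hpoly hdef n z hz1
      have e : d n z = -(z ^ n / 2 * (u n z) ^ 2) := by
        simp only [hd]
        rw [u_rec hpoly hdef n z]
        ring
      rw [e, norm_neg]
      have e2 : ‖z ^ n / 2 * u n z ^ 2‖ = ‖z‖ ^ n / 2 * ‖u n z‖ ^ 2 := by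
        rw [norm_mul, norm_div, norm_pow, norm_pow]
        norm_num
      rw [e2]
      have h5 : ‖z‖ ^ n ≤ ρ ^ n := pow_le_pow_left₀ (norm_nonneg z) (hKb z hz) n
      have h6 : ‖u n z‖ ^ 2 ≤ 16 := by nlinarith [norm_nonneg (u n z)]
      have h7 := mul_le_mul h5 h6 (by positivity) (pow_nonneg hρ0 n)
      linarith
    have htsum := tendstoUniformlyOn_tsum_nat hsum hb
    have h1 : TendstoUniformlyOn (fun N z => (∑ n ∈ Finset.range N, d n z) + u 0 z) v
        atTop K := by
      rw [Metric.tendstoUniformlyOn_iff] at htsum ⊢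
      intro ε hε
      filter_upwards [htsum ε hε] with N hN z hz
      have h2 := hN z hz
      rw [dist_eq_norm] at h2 ⊢
      have e : v z - ((∑ n ∈ Finset.range N, d n z) + u 0 z) =
          (∑' n, d n z) - ∑ n ∈ Finset.range N, d n z := by
        simp only [hv]
        ring
      rw [e]
      exact h2
    refine h1.congr ?_
    filter_upwards with N
    intro z hz
    have hps : ∑ n ∈ Finset.range N, d n z = u N z - u 0 z :=
      Finset.sum_range_sub (fun k => u k z) N
    simp only [hps]
    ring
  have hconv_pt : ∀ lam ∈ ball (0 : ℂ) 1, Tendsto (fun n => u n lam) atTop (nhds (v lam)) := by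
    intro lam hlam
    exact (huc {lam} (by simpa using hlam) isCompact_singleton).tendsto_at rfl
  have hdiff : DifferentiableOn ℂ v (ball (0 : ℂ) 1) := by
    have hloc : TendstoLocallyUniformlyOn (fun n => u n) v atTop (ball (0 : ℂ) 1) :=
      (tendstoLocallyUniformlyOn_iff_forall_isCompact isOpen_ball).2 fun K hK hKc =>
        huc K hK hKc
    refine hloc.differentiableOn (Eventually.of_forall fun n => ?_) isOpen_ball
    obtain ⟨P, hP⟩ := hpoly n
    have hfun : u n = fun z => P.eval z := funext hP
    rw [hfun]
    exact P.differentiable.differentiableOn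
  have hbdd : ∀ lam ∈ ball (0 : ℂ) 1, ‖v lam‖ ≤ 4 := by
    intro lam hlam
    have h1 : ‖lam‖ < 1 := mem_ball_zero_iff.mp hlam
    exact le_of_tendsto (hconv_pt lam hlam).norm
      (Eventually.of_forall fun n => u_bound4 hpoly hdef n lam h1)
  have hu0 : u 0 0 = 1 := u_zero hpoly hdef 0
  have hu10 : u 1 0 = 1 / 2 := by
    have h := u_rec hpoly hdef 0 0
    rw [hu0] at h
    rw [h]
    norm_num
  have hun : ∀ m : ℕ, u (m + 1) 0 = 1 / 2 := by
    intro m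
    induction m with
    | zero => exact hu10
    | succ m ih =>
      have h := u_rec hpoly hdef (m + 1) 0
      rw [ih] at h
      rw [h]
      rw [zero_pow (Nat.succ_ne_zero m)]
      ring
  have hv0 : v 0 = 1 / 2 := by
    have htsum0 : ∑' n, d n 0 = -(1 / 2 : ℂ) := by
      have h0 : d 0 0 = -(1 / 2 : ℂ) := by
        simp only [hd]
        rw [hu10, hu0]
        norm_num
      have hrest : ∀ n : ℕ, n ≠ 0 → d n 0 = 0 := by
        intro n hn
        obtain ⟨m, rfl⟩ := Nat.exists_eq_succ_of_ne_zero hn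
        simp only [hd]
        rw [hun (m + 1), hun m]
        ring
      rw [tsum_eq_single 0 hrest]
      exact h0
    simp only [hv]
    rw [htsum0, hu0]
    norm_num
  exact ⟨v, hdiff, ⟨4, hbdd⟩, hv0, huc⟩

end Main
end Stmt8Aux

open Filter



open Filter

/-- The polynomials `u_n(λ) = λ^{-n} P_λ^n(1)` (where `P_λ(z) = λ(z - z²/2)`) satisfy
`u_0 = 1`, `u_{n+1} = u_n - (λⁿ/2) u_n²`, the bound `|u_n(λ)| ≤ 2(1-|λ|)^{-2}` on `𝔻`,
and converge uniformly on compact subsets of `𝔻` to a bounded holomorphic function `u`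
with `u(0) = 1/2`. -/
theorem stmt8 (u : ℕ → ℂ → ℂ)
    (hpoly : ∀ n, ∃ P : Polynomial ℂ, ∀ z, u n z = P.eval z)
    (hdef : ∀ (n : ℕ) (lam : ℂ), lam ≠ 0 →
      u n lam = lam ^ (-(n : ℤ)) * (fun z => lam * (z - z ^ 2 / 2))^[n] 1) :
    (∀ lam : ℂ, u 0 lam = 1) ∧
    (∀ (n : ℕ) (lam : ℂ), u (n + 1) lam = u n lam - lam ^ n / 2 * (u n lam) ^ 2) ∧
    (∀ (n : ℕ) (lam : ℂ), ‖lam‖ < 1 → ‖u n lam‖ ≤ 2 / (1 - ‖lam‖) ^ 2) ∧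
    (∃ v : ℂ → ℂ, DifferentiableOn ℂ v (Metric.ball 0 1) ∧
      (∃ M : ℝ, ∀ lam ∈ Metric.ball (0 : ℂ) 1, ‖v lam‖ ≤ M) ∧
      v 0 = 1 / 2 ∧
      ∀ K : Set ℂ, K ⊆ Metric.ball (0 : ℂ) 1 → IsCompact K →
        TendstoUniformlyOn (fun n => u n) v atTop K) :=
  ⟨Stmt8Aux.u_zero hpoly hdef, Stmt8Aux.u_rec hpoly hdef,
    Stmt8Aux.u_disk_bound hpoly hdef, Stmt8Aux.u_conv hpoly hdef⟩
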